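/- Let p ≥ 1, let s be a natural number with 1 ≤ s ≤ p/2, let γ ∈ [0,1], and let ε > 0. Define P_{θ,γ} := N(θ, (1−γ)I_p + γ 1_p 1_pᵀ), Θ(p,s,ε) := {θ ∈ ℝ^p : ‖θ‖ ≥ ε and ‖θ‖₀ ≤ s}, Θ_I(p,s,ε) := {θ ∈ ℝ^p : ‖θ − θ̄ 1_p‖ ≥ ε and ‖θ‖₀ ≤ s} with θ̄ := p^{-1} Σ_{i=1}^p θ_i, and the risks R(ε) := inf_φ { P_{0,γ}(φ = 1) + sup_{θ ∈ Θ(p,s,ε)} P_{θ,γ}(φ = 0) } and R_I(ε) := inf_φ { P_{0,γ}(φ = 1) + sup_{θ ∈ Θ_I(p,s,ε)} P_{θ,γ}(φ = 0) }, where the infimum runs over all measurable φ : ℝ^p → {0,1}. Then R_I(ε) ≤ R(ε) ≤ R_I(ε/√2). -/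

import Mathlib

open MeasureTheory ProbabilityTheory Matrix Finset
open scoped Classical ENNReal

noncomputable section

/-- The standard Gaussian measure on `Fin p → ℝ`. -/
def stdGaussianPi (p : ℕ) : Measure (Fin p → ℝ) :=
  Measure.pi fun _ => gaussianReal 0 1

/-- The Gaussian measure `N(θ, S)` on `ℝ^p` with mean `θ` and positive semidefinite
covariance matrix `S`, realized as the pushforward of the standard Gaussian under
`x ↦ θ + √S x` (junk value `0` if `S` is not positive semidefinite). -/
def gaussianPi {p : ℕ} (θ : Fin p → ℝ) (S : Matrix (Fin p) (Fin p) ℝ) :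
    Measure (Fin p → ℝ) :=
  if h : S.PosSemidef then (stdGaussianPi p).map (fun x => θ + ((h.1.eigenvectorUnitary : Matrix (Fin p) (Fin p) ℝ) *
    diagonal (Real.sqrt ∘ h.1.eigenvalues) *
    (star (h.1.eigenvectorUnitary : Matrix (Fin p) (Fin p) ℝ))).mulVec x) else 0

/-- `‖θ‖₀`, the number of nonzero coordinates. -/
def sparsity {p : ℕ} (θ : Fin p → ℝ) : ℕ := Set.ncard {i | θ i ≠ 0}

/-- The Euclidean norm on `Fin p → ℝ`. -/
def l2norm {p : ℕ} (θ : Fin p → ℝ) : ℝ := Real.sqrt (∑ i, θ i ^ 2)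

/-- Minimax testing risk: infimum over measurable tests `φ : ℝ^p → {0,1}` of the
type I error under `P 0` plus the worst-case type II error over the alternative `T`. -/
def minimaxRisk {p : ℕ} (P : (Fin p → ℝ) → Measure (Fin p → ℝ))
    (T : Set (Fin p → ℝ)) : ℝ :=
  ⨅ φ : {f : (Fin p → ℝ) → Bool // Measurable f},
    ((P 0 {x | φ.1 x = true}).toReal + ⨆ θ ∈ T, (P θ {x | φ.1 x = false}).toReal)

lemma gaussianPi_le_one {p : ℕ} (θ : Fin p → ℝ) (S : Matrix (Fin p) (Fin p) ℝ)
    (A : Set (Fin p → ℝ)) : gaussianPi θ S A ≤ 1 := by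
  unfold gaussianPi
  split_ifs with h
  · have hprob : IsProbabilityMeasure (stdGaussianPi p) := by
      unfold stdGaussianPi; infer_instance
    have hmeas : Measurable fun x : Fin p → ℝ => θ + ((h.1.eigenvectorUnitary : Matrix (Fin p) (Fin p) ℝ) * diagonal (Real.sqrt ∘ h.1.eigenvalues) * (star (h.1.eigenvectorUnitary : Matrix (Fin p) (Fin p) ℝ))).mulVec x := by
      apply measurable_pi_lambda
      intro i
      simp only [Pi.add_apply, Matrix.mulVec, dotProduct]
      exact (Finset.measurable_sum _ fun j _ => (measurable_pi_apply j).const_mul _).const_add _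
    have : IsProbabilityMeasure ((stdGaussianPi p).map (fun x => θ + ((h.1.eigenvectorUnitary : Matrix (Fin p) (Fin p) ℝ) * diagonal (Real.sqrt ∘ h.1.eigenvalues) * (star (h.1.eigenvectorUnitary : Matrix (Fin p) (Fin p) ℝ))).mulVec x)) :=
      Measure.isProbabilityMeasure_map hmeas.aemeasurable
    exact prob_le_one
  · simp

lemma biSup_mono_unit {α : Type*} (g : α → ℝ) (hg0 : ∀ a, 0 ≤ g a) (hg1 : ∀ a, g a ≤ 1)
    {T₁ T₂ : Set α} (h : T₁ ⊆ T₂) : (⨆ a ∈ T₁, g a) ≤ ⨆ a ∈ T₂, g a := by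
  have hb : BddAbove (Set.range fun a => ⨆ _ : a ∈ T₂, g a) := by
    refine ⟨1, ?_⟩
    rintro _ ⟨a, rfl⟩
    exact Real.iSup_le (fun _ => hg1 a) zero_le_one
  have h0 : 0 ≤ ⨆ a ∈ T₂, g a :=
    Real.iSup_nonneg fun a => Real.iSup_nonneg fun _ => hg0 a
  refine Real.iSup_le (fun a => Real.iSup_le (fun ha => ?_) h0) h0
  exact le_ciSup_of_le hb a (by rw [ciSup_pos (h ha)])

lemma minimaxRisk_mono {p : ℕ} (P : (Fin p → ℝ) → Measure (Fin p → ℝ))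
    (hP : ∀ θ A, P θ A ≤ 1) {T₁ T₂ : Set (Fin p → ℝ)} (h : T₁ ⊆ T₂) :
    minimaxRisk P T₁ ≤ minimaxRisk P T₂ := by
  unfold _root_.minimaxRisk
  refine ciInf_mono ⟨0, ?_⟩ (fun φ => ?_)
  · rintro _ ⟨φ, rfl⟩
    have : 0 ≤ ⨆ θ ∈ T₁, (P θ {x | φ.1 x = false}).toReal :=
      Real.iSup_nonneg fun θ => Real.iSup_nonneg fun _ => ENNReal.toReal_nonneg
    positivity
  · refine add_le_add le_rfl ?_
    refine biSup_mono_unit _ (fun _ => ENNReal.toReal_nonneg) (fun θ => ?_) h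
    calc (P θ {x | φ.1 x = false}).toReal ≤ (1 : ℝ≥0∞).toReal :=
          ENNReal.toReal_mono ENNReal.one_ne_top (hP θ _)
      _ = 1 := by simp

lemma centered_sum_sq {p : ℕ} (hp : 0 < p) (θ : Fin p → ℝ) :
    ∑ i, (θ i - (∑ j, θ j) / p) ^ 2 = (∑ i, θ i ^ 2) - (∑ i, θ i) ^ 2 / p := by
  have hp' : (p : ℝ) ≠ 0 := Nat.cast_ne_zero.mpr hp.ne'
  have expand : ∀ i : Fin p, (θ i - (∑ j, θ j) / p) ^ 2 =
      θ i ^ 2 - (2 * ((∑ j, θ j) / p)) * θ i + ((∑ j, θ j) / p) ^ 2 := fun i => by ring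
  rw [Finset.sum_congr rfl fun i _ => expand i]
  rw [Finset.sum_add_distrib, Finset.sum_sub_distrib, ← Finset.mul_sum,
    Finset.sum_const, Finset.card_univ, Fintype.card_fin, nsmul_eq_mul]
  field_simp
  ring

theorem problem_decomposition_problemI_equiv
    (p s : ℕ) (hp : 1 ≤ p) (hs1 : 1 ≤ s) (hs2 : (s : ℝ) ≤ (p : ℝ) / 2)
    (γ : ℝ) (hγ0 : 0 ≤ γ) (hγ1 : γ ≤ 1) (ε : ℝ) (hε : 0 < ε) :
    (let P : (Fin p → ℝ) → Measure (Fin p → ℝ) := fun θ =>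
      gaussianPi θ ((1 - γ) • (1 : Matrix (Fin p) (Fin p) ℝ) + γ • Matrix.of fun _ _ => (1 : ℝ))
    let Θ : ℝ → Set (Fin p → ℝ) := fun e =>
      {θ | e ≤ l2norm θ ∧ sparsity θ ≤ s}
    let ΘI : ℝ → Set (Fin p → ℝ) := fun e =>
      {θ | e ≤ l2norm (fun i => θ i - (∑ j, θ j) / p) ∧ sparsity θ ≤ s}
    minimaxRisk P (ΘI ε) ≤ minimaxRisk P (Θ ε) ∧
      minimaxRisk P (Θ ε) ≤ minimaxRisk P (ΘI (ε / Real.sqrt 2))) := by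
  intro P Θ ΘI
  have hp0 : 0 < p := hp
  have hp' : (0:ℝ) < p := Nat.cast_pos.mpr hp0
  have hP : ∀ θ A, P θ A ≤ 1 := fun θ A => gaussianPi_le_one _ _ _
  constructor
  · -- ΘI ε ⊆ Θ ε
    refine minimaxRisk_mono P hP fun θ hθ => ?_
    obtain ⟨h1, h2⟩ := hθ
    refine ⟨?_, h2⟩
    refine h1.trans ?_
    unfold l2norm
    apply Real.sqrt_le_sqrt
    rw [centered_sum_sq hp0]
    have : 0 ≤ (∑ i, θ i) ^ 2 / p := by positivity
    linarith
  · -- Θ ε ⊆ ΘI (ε/√2)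
    refine minimaxRisk_mono P hP fun θ hθ => ?_
    obtain ⟨h1, h2⟩ := hθ
    refine ⟨?_, h2⟩
    -- Cauchy–Schwarz on the support
    have hsupp : {i | θ i ≠ 0}.ncard = (Finset.univ.filter fun i => θ i ≠ 0).card := by
      rw [← Set.ncard_coe_finset]
      congr 1
      ext i; simp
    have hcard : ((Finset.univ.filter fun i => θ i ≠ 0).card : ℝ) ≤ s := by
      rw [← hsupp]
      exact_mod_cast h2
    have hCS : (∑ i, θ i) ^ 2 ≤ (s : ℝ) * ∑ i, θ i ^ 2 := by
      have hsum : ∑ i, θ i = ∑ i ∈ Finset.univ.filter fun i => θ i ≠ 0, θ i := by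
        rw [Finset.sum_filter_of_ne]
        intro i _ h
        simpa using h
      have := Finset.sum_mul_sq_le_sq_mul_sq (Finset.univ.filter fun i => θ i ≠ 0)
        (fun _ => (1:ℝ)) θ
      simp only [one_mul, one_pow, Finset.sum_const, nsmul_eq_mul, mul_one] at this
      calc (∑ i, θ i) ^ 2 = (∑ i ∈ Finset.univ.filter fun i => θ i ≠ 0, θ i) ^ 2 := by
            rw [hsum]
        _ ≤ ((Finset.univ.filter fun i => θ i ≠ 0).card : ℝ) *
              ∑ i ∈ Finset.univ.filter fun i => θ i ≠ 0, θ i ^ 2 := this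
        _ ≤ (s : ℝ) * ∑ i, θ i ^ 2 := by
            apply mul_le_mul hcard
            · exact Finset.sum_le_sum_of_subset_of_nonneg (Finset.filter_subset _ _)
                (fun i _ _ => sq_nonneg _)
            · exact Finset.sum_nonneg fun i _ => sq_nonneg _
            · exact Nat.cast_nonneg _
    have hε2 : ε ^ 2 ≤ ∑ i, θ i ^ 2 := by
      have hnn : (0:ℝ) ≤ ∑ i, θ i ^ 2 := Finset.sum_nonneg fun i _ => sq_nonneg _
      have h1' : ε ≤ Real.sqrt (∑ i, θ i ^ 2) := h1
      nlinarith [Real.sq_sqrt hnn, Real.sqrt_nonneg (∑ i, θ i ^ 2)]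
    have hkey : ε ^ 2 / 2 ≤ ∑ i, (θ i - (∑ j, θ j) / p) ^ 2 := by
      rw [centered_sum_sq hp0]
      have hfrac : (∑ i, θ i) ^ 2 / p ≤ (∑ i, θ i ^ 2) / 2 := by
        rw [div_le_div_iff₀ hp' two_pos]
        calc (∑ i, θ i) ^ 2 * 2 ≤ ((s:ℝ) * ∑ i, θ i ^ 2) * 2 := by
              nlinarith [hCS]
          _ ≤ (∑ i, θ i ^ 2) * p := by
              have hnn : 0 ≤ ∑ i, θ i ^ 2 := Finset.sum_nonneg fun i _ => sq_nonneg _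
              nlinarith [hs2]
      linarith
    unfold l2norm
    have h2pos : (0:ℝ) < Real.sqrt 2 := Real.sqrt_pos.mpr two_pos
    rw [div_le_iff₀ h2pos]
    have : ε ≤ Real.sqrt (∑ i, (θ i - (∑ j, θ j) / p) ^ 2) * Real.sqrt 2 := by
      rw [← Real.sqrt_mul (Finset.sum_nonneg fun i _ => sq_nonneg _)]
      have : ε = Real.sqrt (ε ^ 2) := (Real.sqrt_sq hε.le).symm
      rw [this]
      apply Real.sqrt_le_sqrt
      linarith [hkey]
    linarith [this]

end
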